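/- arXiv:2402.09486 — 2 statements merged into one kernel-verified Lean document; each statement's English description precedes it below -/
import Mathlib

section
/- Let Y ⊆ ℝ^m, let z ∈ ℝ^m, and let λ ∈ ℝ^m with λ_i > 0 for all i. Suppose there exists k > 0 such that the point y* defined by y*_i = z_i + k·λ_i for all i belongs to Y and is Pareto optimal in Y (the full-mapping assumption). Then y* minimizes the modified Tchebycheff aggregation over Y: g^mtche(y*, λ) = k, and for every y ∈ Y, max_{i ∈ [m]} (y_i − z_i)/λ_i ≥ k. -/
/-- Under the full-mapping assumption, the point `y* = z + k·λ` (with `k > 0`),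
assumed to be Pareto optimal in `Y`, minimizes the modified Tchebycheff aggregation
`g^mtche(·, λ) = max_i (· i − z i)/λ i` over `Y`, and its value is `k`. -/
theorem full_mapping_point_minimizes_mtche {m : ℕ} (hm : 0 < m)
    (Y : Set (Fin m → ℝ)) (z lam : Fin m → ℝ) (hlam : ∀ i, 0 < lam i)
    (k : ℝ) (hk : 0 < k)
    (ystar : Fin m → ℝ) (hdef : ∀ i, ystar i = z i + k * lam i)
    (hmem : ystar ∈ Y)
    (hpareto : ¬ ∃ y ∈ Y, (∀ i, y i ≤ ystar i) ∧ ∃ j, y j < ystar j) :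
    Finset.univ.sup' (Finset.univ_nonempty_iff.mpr (Fin.pos_iff_nonempty.mp hm))
        (fun i => (ystar i - z i) / lam i) = k ∧
    ∀ y ∈ Y, k ≤ Finset.univ.sup' (Finset.univ_nonempty_iff.mpr (Fin.pos_iff_nonempty.mp hm))
        (fun i => (y i - z i) / lam i) := by
  have hval : ∀ i, (ystar i - z i) / lam i = k := by
    intro i
    rw [hdef i]
    field_simp [(hlam i).ne']
    ring
  constructor
  · apply le_antisymm
    · apply Finset.sup'_le
      intro i _
      rw [hval i]
    · obtain ⟨i⟩ := Fin.pos_iff_nonempty.mp hm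
      calc k = (ystar i - z i) / lam i := (hval i).symm
        _ ≤ _ := Finset.le_sup' (fun i => (ystar i - z i) / lam i) (Finset.mem_univ i)
  · intro y hy
    by_contra h
    push_neg at h
    apply hpareto
    refine ⟨y, hy, ?_, ?_⟩
    · intro i
      have h1 : (y i - z i) / lam i < k := lt_of_le_of_lt
        (Finset.le_sup' (fun i => (y i - z i) / lam i) (Finset.mem_univ i)) h
      have := (div_lt_iff₀ (hlam i)).mp h1
      rw [hdef i]; linarith
    · obtain ⟨i⟩ := Fin.pos_iff_nonempty.mp hm
      have h1 : (y i - z i) / lam i < k := lt_of_le_of_lt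
        (Finset.le_sup' (fun i => (y i - z i) / lam i) (Finset.mem_univ i)) h
      have := (div_lt_iff₀ (hlam i)).mp h1
      exact ⟨i, by rw [hdef i]; linarith⟩
end

section
/- Let (T, ρ) be a metric space. For each integer n ≥ 2 define the optimal n-point separation δ*(n) = sup over subsets S ⊆ T of cardinality n of (min over pairs of distinct points s, s' ∈ S of ρ(s, s')). Let N ≥ 2 and suppose S ⊆ T is a subset of cardinality N whose minimal pairwise distance equals δ*(N) (i.e., S attains the optimal configuration), and assume the separation is strictly decreasing at N: δ*(N+1) < δ*(N). Then S is non-asymptotically uniform on T with parameter δ*(N): for every y ∈ T there exists s ∈ S with ρ(y, s) ≤ δ*(N). -/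
/-- The minimal pairwise distance of a finite configuration `S` in a metric space. -/
noncomputable def minSep {T : Type*} [MetricSpace T] (S : Finset T) : ℝ :=
  sInf {d : ℝ | ∃ s ∈ S, ∃ s' ∈ S, s ≠ s' ∧ d = dist s s'}

/-- The optimal `n`-point separation `δ*(n)`: the supremum, over configurations of
cardinality `n`, of the minimal pairwise distance. -/
noncomputable def optSep (T : Type*) [MetricSpace T] (n : ℕ) : ℝ :=
  sSup {d : ℝ | ∃ S : Finset T, S.card = n ∧ d = minSep S}

lemma pairSet_bddBelow {T : Type*} [MetricSpace T] (S : Finset T) :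
    BddBelow {d : ℝ | ∃ s ∈ S, ∃ s' ∈ S, s ≠ s' ∧ d = dist s s'} := by
  refine ⟨0, ?_⟩
  rintro d ⟨s, _, s', _, _, rfl⟩
  exact dist_nonneg

lemma minSep_le_dist {T : Type*} [MetricSpace T] {S : Finset T} {s s' : T}
    (hs : s ∈ S) (hs' : s' ∈ S) (hne : s ≠ s') : minSep S ≤ dist s s' :=
  csInf_le (pairSet_bddBelow S) ⟨s, hs, s', hs', hne, rfl⟩

lemma minSep_mono {T : Type*} [MetricSpace T] {A B : Finset T}
    (hAB : A ⊆ B) (hA : 1 < A.card) : minSep B ≤ minSep A := by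
  obtain ⟨a, ha, b, hb, hab⟩ := Finset.one_lt_card.mp hA
  refine csInf_le_csInf (pairSet_bddBelow B) ⟨_, a, ha, b, hb, hab, rfl⟩ ?_
  rintro d ⟨s, hs, s', hs', hne, rfl⟩
  exact ⟨s, hAB hs, s', hAB hs', hne, rfl⟩

/-- If a configuration `S` of `N ≥ 2` points attains the optimal separation
`δ*(N)` and the optimal separation is strictly decreasing at `N` (`δ*(N+1) < δ*(N)`), then
`S` is non-asymptotically uniform on `T` with parameter `δ*(N)`: every point of `T` lies
within distance `δ*(N)` of some point of `S`. -/
theorem optimal_configuration_is_nonasymptotically_uniform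
    {T : Type*} [MetricSpace T] (N : ℕ) (hN : 2 ≤ N)
    (S : Finset T) (hcard : S.card = N)
    (hopt : minSep S = optSep T N)
    (hdec : optSep T (N + 1) < optSep T N) :
    ∀ y : T, ∃ s ∈ S, dist y s ≤ optSep T N := by
  classical
  intro y
  by_contra h
  push_neg at h
  have h2 : 1 < S.card := by omega
  obtain ⟨a, ha, b, hb, hab⟩ := Finset.one_lt_card.mp h2
  have hmin_nonneg : 0 ≤ minSep S := by
    refine le_csInf ⟨_, a, ha, b, hb, hab, rfl⟩ ?_
    rintro d ⟨s, _, s', _, _, rfl⟩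
    exact dist_nonneg
  have hyS : y ∉ S := by
    intro hy
    have := h y hy
    rw [dist_self] at this
    linarith [hopt ▸ hmin_nonneg]
  set S' : Finset T := insert y S with hS'
  have hcard' : S'.card = N + 1 := by
    rw [hS', Finset.card_insert_of_notMem hyS, hcard]
  have hle : minSep S ≤ minSep S' := by
    refine le_csInf ⟨_, a, Finset.mem_insert_of_mem ha, b, Finset.mem_insert_of_mem hb,
      hab, rfl⟩ ?_
    rintro d ⟨s, hs, s', hs', hne, rfl⟩
    rcases Finset.mem_insert.mp hs with hsy | hsS
    · rcases Finset.mem_insert.mp hs' with hs'y | hs'S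
      · exact absurd (hsy.trans hs'y.symm) hne
      · subst hsy
        exact le_of_lt (hopt ▸ h s' hs'S)
    · rcases Finset.mem_insert.mp hs' with hs'y | hs'S
      · subst hs'y
        rw [dist_comm]
        exact le_of_lt (hopt ▸ h s hsS)
      · exact minSep_le_dist hsS hs'S hne
  by_cases hbdd : BddAbove {d : ℝ | ∃ B : Finset T, B.card = N + 1 ∧ d = minSep B}
  · have hmem : minSep S' ≤ optSep T (N + 1) :=
      le_csSup hbdd ⟨S', hcard', rfl⟩
    linarith [hopt ▸ hle]
  · -- unbounded (N+1)-set forces unbounded N-set; then both sups are 0, contradiction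
    have hNbdd : ¬ BddAbove {d : ℝ | ∃ B : Finset T, B.card = N ∧ d = minSep B} := by
      intro ⟨M, hM⟩
      apply hbdd
      refine ⟨M, ?_⟩
      rintro d ⟨B, hB, rfl⟩
      obtain ⟨A, hAB, hA⟩ := Finset.exists_subset_card_eq (show N ≤ B.card by omega)
      have h1A : 1 < A.card := by omega
      exact le_trans (minSep_mono hAB h1A) (hM ⟨A, hA, rfl⟩)
    rw [optSep, optSep, Real.sSup_of_not_bddAbove hbdd,
      Real.sSup_of_not_bddAbove hNbdd] at hdec
    exact lt_irrefl 0 hdec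
end
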